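/- Let A = x y^T - D where D = diag(d_1,...,d_N) with all d_i > 0, x_i > 0 for all i, and y ∈ ℝ^N such that Σ_i x_i y_i / (d_i + ν) < 1 for all ν ≥ 0. Then every real eigenvalue of A is strictly negative. -/

import Mathlib

open Matrix Finset

/-- If `A = x yᵀ - D` with `D = diag(d)`, `d i > 0`, `x i > 0`, and
`∑ i, x i y i / (d i + ν) < 1` for all `ν ≥ 0`, then every real eigenvalue of `A`
is strictly negative. -/
theorem rank_one_update_eigenvalues_neg (N : ℕ)
    (x y d : Fin N → ℝ) (hd : ∀ i, 0 < d i) (hx : ∀ i, 0 < x i)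
    (hsum : ∀ ν ≥ (0 : ℝ), ∑ i, x i * y i / (d i + ν) < 1) :
    ∀ ν : ℝ, (∃ v : Fin N → ℝ, v ≠ 0 ∧
        (Matrix.vecMulVec x y - Matrix.diagonal d).mulVec v = ν • v) →
      ν < 0 := by
  intro ν ⟨v, hv, heq⟩
  by_contra h0
  push_neg at h0
  set c : ℝ := ∑ j, y j * v j with hc
  have hpos : ∀ i, 0 < d i + ν := fun i => by linarith [hd i]
  have hvi : ∀ i, v i = x i * c / (d i + ν) := by
    intro i
    have := congrFun heq i
    simp only [Matrix.sub_apply, Pi.smul_apply, smul_eq_mul, Matrix.mulVec,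
      Matrix.vecMulVec_apply, dotProduct, sub_mul, Finset.sum_sub_distrib,
      Matrix.diagonal_apply, ite_mul, zero_mul, Finset.sum_ite_eq', Finset.sum_ite_eq, Finset.mem_univ,
      if_true, mul_assoc] at this
    have h2 : x i * c - d i * v i = ν * v i := by
      rw [hc, Finset.mul_sum]
      rw [← this]
    have hne := (hpos i).ne'
    field_simp
    linarith
  have hcne : c ≠ 0 := by
    intro h
    apply hv
    funext i
    simp [hvi i, h]
  have key : c = c * ∑ i, x i * y i / (d i + ν) := by
    rw [Finset.mul_sum]
    calc c = ∑ j, y j * v j := hc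
    _ = ∑ j, c * (x j * y j / (d j + ν)) := by
        apply Finset.sum_congr rfl
        intro j _
        rw [hvi j]
        field_simp
  have h1 : (∑ i, x i * y i / (d i + ν)) = 1 := by
    have := mul_left_cancel₀ hcne (by rw [mul_one]; exact key.symm :
      c * (∑ i, x i * y i / (d i + ν)) = c * 1)
    exact this
  linarith [hsum ν h0]
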